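/- Consider system (1) under Assumption (A1) and run Algorithm 1. Then there exists a finite constant β̂ ≥ ε such that |θ̂_{k,k−1,t}(i)| ≤ β̂ for all k ≥ 1 and all 0 ≤ i ≤ t ≤ T−1, and moreover θ̂_{k,k−1,t}(t) ∈ [ε, β̂] for all k ≥ 1 and all t ∈ {0,…,T−1}. This holds for any choice of λ > 0 and γ₁,…,γ_m > 0. -/

import Mathlib

open Filter

/-- The argument vector `(y(t),…,y(t−l), u(t),…,u(t−n))` fed to the nonlinearity of
system (1), with the conventions `y(i) = 0` and `u(i) = 0` for `i < 0`. -/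
def sysArg (l n : ℕ) (y u : ℕ → ℝ) (t : ℕ) : Fin (l + n + 2) → ℝ :=
  fun j =>
    if (j : ℕ) ≤ l then (if (j : ℕ) ≤ t then y (t - (j : ℕ)) else 0)
    else (if (j : ℕ) - (l + 1) ≤ t then u (t - ((j : ℕ) - (l + 1))) else 0)

/-- `y` is the output trajectory of system (1) generated by the nonlinearity `f`,
the initial output `y₀` and the input sequence `u`. -/
def IsTraj (l n T : ℕ) (f : (Fin (l + n + 2) → ℝ) → ℕ → ℝ) (y₀ : ℝ)
    (u y : ℕ → ℝ) : Prop :=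
  y 0 = y₀ ∧ ∀ t, t < T → y (t + 1) = f (sysArg l n y u t) t

noncomputable def zfun (l n : ℕ) (f : (Fin (l + n + 2) → ℝ) → ℕ → ℝ) (y₀ : ℝ)
    (v : ℕ → ℝ) : ℕ → ℝ
  | 0 => y₀
  | (t + 1) =>
      f (sysArg l n (fun s => if h : s < t + 1 then zfun l n f y₀ v s else 0) v t) t
decreasing_by exact h

lemma sysArg_congr (l n : ℕ) (y y' u : ℕ → ℝ) (t : ℕ)
    (h : ∀ s, s ≤ t → y s = y' s) : sysArg l n y u t = sysArg l n y' u t := by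
  funext j
  unfold sysArg
  split_ifs with h1 h2
  · exact h _ (Nat.sub_le _ _)
  · rfl
  · rfl
  · rfl

lemma zfun_succ (l n : ℕ) (f : (Fin (l + n + 2) → ℝ) → ℕ → ℝ) (y₀ : ℝ)
    (v : ℕ → ℝ) (t : ℕ) :
    zfun l n f y₀ v (t + 1) = f (sysArg l n (zfun l n f y₀ v) v t) t := by
  rw [zfun]
  congr 1
  apply sysArg_congr
  intro s hs
  rw [dif_pos (by omega : s < t + 1)]

lemma zfun_traj (l n T : ℕ) (f : (Fin (l + n + 2) → ℝ) → ℕ → ℝ) (y₀ : ℝ)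
    (v yv : ℕ → ℝ) (hv : IsTraj l n T f y₀ v yv) :
    ∀ s, s ≤ T → yv s = zfun l n f y₀ v s := by
  intro s
  induction s using Nat.strong_induction_on with
  | _ s ih =>
    match s with
    | 0 => intro _; rw [zfun]; exact hv.1
    | (t + 1) =>
      intro hsT
      rw [hv.2 t (by omega), zfun_succ]
      congr 1
      apply sysArg_congr
      intro s hs
      exact ih s (by omega) (by omega)

lemma ctsLinear_apply_eq_sum {N : ℕ} (L : (Fin N → ℝ) →L[ℝ] ℝ) (d : Fin N → ℝ) :
    L d = ∑ j, d j * L (Pi.single j 1) := by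
  have hd : d = ∑ j : Fin N, d j • (Pi.single j 1 : Fin N → ℝ) := by
    funext q
    simp [Finset.sum_apply, Pi.single_apply]
  conv_lhs => rw [hd]
  rw [map_sum]
  simp [smul_eq_mul]

lemma step_core {N : ℕ} (L : (Fin N → ℝ) →L[ℝ] ℝ) (e : Fin N → ℕ → ℝ) (Δ : ℕ → ℝ) (T : ℕ) :
    L (fun j => ∑ q ∈ Finset.range T, e j q * Δ q)
      = ∑ q ∈ Finset.range T, (∑ j : Fin N, e j q * L (Pi.single j 1)) * Δ q := by
  rw [ctsLinear_apply_eq_sum]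
  simp only [Finset.sum_mul]
  rw [Finset.sum_comm]
  exact Finset.sum_congr rfl fun q _ => Finset.sum_congr rfl fun j _ => by ring

def coefE (l n t : ℕ) (cc : ℕ → ℕ → ℝ) (j : Fin (l + n + 2)) (q : ℕ) : ℝ :=
  if (j : ℕ) ≤ l then (if (j : ℕ) ≤ t then cc (t - (j : ℕ)) q else 0)
  else (if ((j : ℕ) - (l + 1) ≤ t ∧ q = t - ((j : ℕ) - (l + 1))) then 1 else 0)

lemma zfun_hasDerivAt (l n T : ℕ) (βmax : ℝ) (hβ : 0 ≤ βmax)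
    (f : (Fin (l + n + 2) → ℝ) → ℕ → ℝ)
    (hf1 : ∀ t, t < T → ContDiff ℝ 1 fun x => f x t)
    (hf2 : ∀ t, t < T → ∀ x, ∀ i, |fderiv ℝ (fun x => f x t) x (Pi.single i 1)| ≤ βmax)
    (y₀ : ℝ) (v w : ℕ → ℝ) :
    ∀ t, t ≤ T → ∀ r : ℝ, ∃ c : ℕ → ℝ,
      (∀ j, |c j| ≤ ((l + n + 2 : ℝ) * (βmax + 1) + 1) ^ t - 1) ∧
      (∀ j, t ≤ j → c j = 0) ∧
      HasDerivAt (fun ρ => zfun l n f y₀ (fun i => w i + ρ * (v i - w i)) t)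
        (∑ q ∈ Finset.range T, c q * (v q - w q)) r := by
  set K : ℝ := (l + n + 2 : ℝ) * (βmax + 1) + 1 with hKdef
  have hK1 : (1 : ℝ) ≤ K := by
    have : (0:ℝ) ≤ (l + n + 2 : ℝ) := by positivity
    nlinarith
  intro t
  induction t using Nat.strong_induction_on with
  | _ t ih =>
    match t with
    | 0 =>
      intro _ r
      refine ⟨fun _ => 0, by simp, fun _ _ => rfl, ?_⟩
      have hz : (fun ρ => zfun l n f y₀ (fun i => w i + ρ * (v i - w i)) 0)
          = fun _ => y₀ := by funext ρ; rw [zfun]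
      rw [hz]
      simpa using hasDerivAt_const r y₀
    | (t + 1) =>
      intro htT r
      -- package the induction hypothesis as a total choice function
      have H : ∀ s, ∃ c : ℕ → ℝ, s ≤ t →
          ((∀ j, |c j| ≤ K ^ s - 1) ∧ (∀ j, s ≤ j → c j = 0) ∧
          HasDerivAt (fun ρ => zfun l n f y₀ (fun i => w i + ρ * (v i - w i)) s)
            (∑ q ∈ Finset.range T, c q * (v q - w q)) r) := by
        intro s
        by_cases hs : s ≤ t
        · obtain ⟨c, h1, h2, h3⟩ := ih s (by omega) (by omega) r
          exact ⟨c, fun _ => ⟨h1, h2, h3⟩⟩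
        · exact ⟨fun _ => 0, fun h => absurd h hs⟩
      choose cc hcc using H
      -- the state at parameter r
      set X : Fin (l + n + 2) → ℝ :=
        sysArg l n (fun s => zfun l n f y₀ (fun i => w i + r * (v i - w i)) s)
          (fun i => w i + r * (v i - w i)) t with hXdef
      set L : (Fin (l + n + 2) → ℝ) →L[ℝ] ℝ := fderiv ℝ (fun x => f x t) X with hLdef
      -- derivative of each coordinate of the argument vector
      have hAj : ∀ j : Fin (l + n + 2),
          HasDerivAt (fun ρ => sysArg l n
              (fun s => zfun l n f y₀ (fun i => w i + ρ * (v i - w i)) s)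
              (fun i => w i + ρ * (v i - w i)) t j)
            (∑ q ∈ Finset.range T, coefE l n t cc j q * (v q - w q)) r := by
        intro j
        by_cases hj : (j : ℕ) ≤ l
        · by_cases hjt : (j : ℕ) ≤ t
          · simp only [sysArg, coefE, if_pos hj, if_pos hjt]
            exact (hcc (t - (j : ℕ)) (by omega)).2.2
          · simp only [sysArg, coefE, if_pos hj, if_neg hjt]
            simpa using hasDerivAt_const r (0:ℝ)
        · by_cases hp : (j : ℕ) - (l + 1) ≤ t
          · simp only [sysArg, coefE, if_neg hj]
            have hsum : (∑ q ∈ Finset.range T,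
                (if ((j : ℕ) - (l + 1) ≤ t ∧ q = t - ((j : ℕ) - (l + 1))) then (1:ℝ) else 0)
                  * (v q - w q))
                = v (t - ((j : ℕ) - (l + 1))) - w (t - ((j : ℕ) - (l + 1))) := by
              simp only [hp, true_and, ite_mul, one_mul, zero_mul]
              rw [Finset.sum_ite_eq' (Finset.range T)]
              rw [if_pos (Finset.mem_range.mpr (by omega))]
            rw [hsum]
            simp only [if_pos hp]
            have := ((hasDerivAt_id r).mul_const
                (v (t - ((j : ℕ) - (l + 1))) - w (t - ((j : ℕ) - (l + 1))))).const_add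
                (w (t - ((j : ℕ) - (l + 1))))
            simpa using this
          · simp only [sysArg, coefE, if_neg hj, if_neg hp]
            have hsum : (∑ q ∈ Finset.range T,
                (if ((j : ℕ) - (l + 1) ≤ t ∧ q = t - ((j : ℕ) - (l + 1))) then (1:ℝ) else 0)
                  * (v q - w q)) = 0 := by
              apply Finset.sum_eq_zero
              intro q _
              rw [if_neg (by tauto), zero_mul]
            rw [hsum]
            exact hasDerivAt_const r (0:ℝ)
      have hA : HasDerivAt (fun ρ => sysArg l n
            (fun s => zfun l n f y₀ (fun i => w i + ρ * (v i - w i)) s)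
            (fun i => w i + ρ * (v i - w i)) t)
          (fun j => ∑ q ∈ Finset.range T, coefE l n t cc j q * (v q - w q)) r :=
        hasDerivAt_pi.mpr hAj
      have hdiff : HasFDerivAt (fun x => f x t) L X :=
        (((hf1 t (by omega)).differentiable one_ne_zero) X).hasFDerivAt
      have hcomp := hdiff.comp_hasDerivAt r hA
      refine ⟨fun q => ∑ j : Fin (l + n + 2), coefE l n t cc j q * L (Pi.single j 1),
        ?_, ?_, ?_⟩
      · -- bound
        intro q
        have hK0 : (0:ℝ) < K := by linarith
        have hKt : (1 : ℝ) ≤ K ^ t := one_le_pow₀ hK1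
        have hN : (0:ℝ) ≤ (l + n + 2 : ℝ) := by positivity
        have hLb : ∀ j : Fin (l + n + 2), |L (Pi.single j 1)| ≤ βmax :=
          fun j => hf2 t (by omega) X j
        have hEb : ∀ j : Fin (l + n + 2), |coefE l n t cc j q| ≤ K ^ t := by
          intro j
          rw [coefE]
          split_ifs with h1 h2 h3
          · calc |cc (t - (j : ℕ)) q| ≤ K ^ (t - (j : ℕ)) - 1 := (hcc _ (by omega)).1 q
              _ ≤ K ^ t := by
                  have := pow_le_pow_right₀ hK1 (by omega : t - (j : ℕ) ≤ t)
                  linarith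
          · simpa using by positivity
          · simpa using hKt
          · simpa using by positivity
        calc |∑ j : Fin (l + n + 2), coefE l n t cc j q * L (Pi.single j 1)|
            ≤ ∑ j : Fin (l + n + 2), |coefE l n t cc j q * L (Pi.single j 1)| :=
              Finset.abs_sum_le_sum_abs _ _
          _ ≤ ∑ _j : Fin (l + n + 2), K ^ t * βmax :=
              Finset.sum_le_sum fun j _ => by
                rw [abs_mul]
                exact mul_le_mul (hEb j) (hLb j) (abs_nonneg _) (by positivity)
          _ = (l + n + 2 : ℝ) * (K ^ t * βmax) := by
              rw [Finset.sum_const, Finset.card_univ, Fintype.card_fin, nsmul_eq_mul]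
              push_cast
              ring
          _ ≤ K ^ (t + 1) - 1 := by
              have hps : K ^ (t + 1) = K ^ t * K := pow_succ K t
              have hNK : (0:ℝ) ≤ (l + n + 2 : ℝ) * K ^ t :=
                mul_nonneg hN (by linarith)
              nlinarith [hKt, hβ, hps, hNK]
      · -- vanishing
        intro q hq
        apply Finset.sum_eq_zero
        intro j _
        rw [coefE]
        split_ifs with h1 h2 h3
        · rw [(hcc (t - (j : ℕ)) (by omega)).2.1 q (by omega), zero_mul]
        · rw [zero_mul]
        · omega
        · rw [zero_mul]
      · -- derivative
        have hfun : (fun ρ => zfun l n f y₀ (fun i => w i + ρ * (v i - w i)) (t + 1))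
            = fun ρ => f (sysArg l n
              (fun s => zfun l n f y₀ (fun i => w i + ρ * (v i - w i)) s)
              (fun i => w i + ρ * (v i - w i)) t) t := by
          funext ρ
          rw [zfun_succ]
        rw [hfun]
        have hval := step_core L (coefE l n t cc) (fun q => v q - w q) T
        rw [← hval]
        exact hcomp

lemma key_repr (l n T : ℕ) (βmax : ℝ) (hβ : 0 ≤ βmax)
    (f : (Fin (l + n + 2) → ℝ) → ℕ → ℝ)
    (hf1 : ∀ t, t < T → ContDiff ℝ 1 fun x => f x t)
    (hf2 : ∀ t, t < T → ∀ x, ∀ i, |fderiv ℝ (fun x => f x t) x (Pi.single i 1)| ≤ βmax)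
    (y₀ : ℝ) (v w yv yw : ℕ → ℝ)
    (hv : IsTraj l n T f y₀ v yv) (hw : IsTraj l n T f y₀ w yw)
    (t : ℕ) (ht : t < T) :
    ∃ c : ℕ → ℝ, (∀ j, |c j| ≤ ((l + n + 2 : ℝ) * (βmax + 1) + 1) ^ T) ∧
      yv (t + 1) - yw (t + 1) = ∑ q ∈ Finset.range (t + 1), c q * (v q - w q) := by
  have hK1 : (1 : ℝ) ≤ (l + n + 2 : ℝ) * (βmax + 1) + 1 := by
    have : (0:ℝ) ≤ (l + n + 2 : ℝ) := by positivity
    nlinarith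
  choose cF h1 h2 h3 using zfun_hasDerivAt l n T βmax hβ f hf1 hf2 y₀ v w (t + 1) (by omega)
  obtain ⟨ξ, hξ, heq⟩ := exists_hasDerivAt_eq_slope
    (fun ρ => zfun l n f y₀ (fun i => w i + ρ * (v i - w i)) (t + 1))
    (fun ρ => ∑ q ∈ Finset.range T, cF ρ q * (v q - w q)) one_pos
    (fun x _ => (h3 x).continuousAt.continuousWithinAt)
    (fun x _ => h3 x)
  norm_num at heq
  refine ⟨cF ξ, ?_, ?_⟩
  · intro j
    refine (h1 ξ j).trans ?_
    have := pow_le_pow_right₀ hK1 (by omega : t + 1 ≤ T)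
    linarith
  · have e1 : zfun l n f y₀ (fun i => v i) (t + 1) = yv (t + 1) :=
      (zfun_traj l n T f y₀ v yv hv (t + 1) (by omega)).symm
    have e0 : zfun l n f y₀ (fun i => w i) (t + 1) = yw (t + 1) :=
      (zfun_traj l n T f y₀ w yw hw (t + 1) (by omega)).symm
    have hsub : ∑ q ∈ Finset.range (t + 1), cF ξ q * (v q - w q)
        = ∑ q ∈ Finset.range T, cF ξ q * (v q - w q) :=
      Finset.sum_subset (Finset.range_subset_range.mpr (by omega))
        (fun q hq hq' => by
          rw [h2 ξ q (by simp only [Finset.mem_range] at hq hq' ⊢; omega), zero_mul])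
    rw [hsub, heq, e1, e0]

lemma sq_contract (s : Finset ℕ) (wv φ : ℕ → ℝ) (μ : ℝ) (hμ : 0 < μ) :
    ∑ i ∈ s, (wv i - φ i * ((∑ j ∈ s, φ j * wv j) / (μ + ∑ j ∈ s, φ j ^ 2))) ^ 2
      ≤ ∑ i ∈ s, wv i ^ 2 := by
  set S := ∑ j ∈ s, φ j ^ 2 with hSdef
  have hS0 : 0 ≤ S := Finset.sum_nonneg fun _ _ => sq_nonneg _
  set P := ∑ j ∈ s, φ j * wv j with hPdef
  have hD : 0 < μ + S := by linarith
  set q := P / (μ + S) with hqdef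
  have hqD : q * (μ + S) = P := div_mul_cancel₀ P (ne_of_gt hD)
  have hexp : ∑ i ∈ s, (wv i - φ i * q) ^ 2
      = (∑ i ∈ s, wv i ^ 2) - 2 * q * P + q ^ 2 * S := by
    have hterm : ∀ i ∈ s, (wv i - φ i * q) ^ 2
        = wv i ^ 2 - 2 * q * (φ i * wv i) + q ^ 2 * φ i ^ 2 := fun i _ => by ring
    rw [Finset.sum_congr rfl hterm, Finset.sum_add_distrib, Finset.sum_sub_distrib,
      ← Finset.mul_sum, ← Finset.mul_sum, ← hPdef, ← hSdef]
  rw [hexp]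
  have h2 : 2 * q * P - q ^ 2 * S = q ^ 2 * (2 * μ + S) := by rw [← hqD]; ring
  have h3 : 0 ≤ q ^ 2 * (2 * μ + S) := mul_nonneg (sq_nonneg _) (by linarith)
  linarith

lemma sqrt_sum_sq_add (s : Finset ℕ) (x y : ℕ → ℝ) :
    Real.sqrt (∑ i ∈ s, (x i + y i) ^ 2)
      ≤ Real.sqrt (∑ i ∈ s, x i ^ 2) + Real.sqrt (∑ i ∈ s, y i ^ 2) := by
  have hx : 0 ≤ ∑ i ∈ s, x i ^ 2 := Finset.sum_nonneg fun _ _ => sq_nonneg _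
  have hy : 0 ≤ ∑ i ∈ s, y i ^ 2 := Finset.sum_nonneg fun _ _ => sq_nonneg _
  have hCS := Real.sum_mul_le_sqrt_mul_sqrt s x y
  have hexp : ∑ i ∈ s, (x i + y i) ^ 2
      = (∑ i ∈ s, x i ^ 2) + 2 * (∑ i ∈ s, x i * y i) + ∑ i ∈ s, y i ^ 2 := by
    have hterm : ∀ i ∈ s, (x i + y i) ^ 2
        = x i ^ 2 + 2 * (x i * y i) + y i ^ 2 := fun i _ => by ring
    rw [Finset.sum_congr rfl hterm, Finset.sum_add_distrib, Finset.sum_add_distrib,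
      ← Finset.mul_sum]
  calc Real.sqrt (∑ i ∈ s, (x i + y i) ^ 2)
      ≤ Real.sqrt ((Real.sqrt (∑ i ∈ s, x i ^ 2) + Real.sqrt (∑ i ∈ s, y i ^ 2)) ^ 2) := by
        apply Real.sqrt_le_sqrt
        rw [hexp]
        nlinarith [Real.sq_sqrt hx, Real.sq_sqrt hy, Real.sqrt_nonneg (∑ i ∈ s, x i ^ 2),
          Real.sqrt_nonneg (∑ i ∈ s, y i ^ 2)]
    _ = _ := Real.sqrt_sq (by positivity)

lemma sqrt_add_le' (x y : ℝ) (hx : 0 ≤ x) (hy : 0 ≤ y) :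
    Real.sqrt (x + y) ≤ Real.sqrt x + Real.sqrt y := by
  calc Real.sqrt (x + y) ≤ Real.sqrt ((Real.sqrt x + Real.sqrt y) ^ 2) := by
        apply Real.sqrt_le_sqrt
        nlinarith [Real.sq_sqrt hx, Real.sq_sqrt hy, Real.sqrt_nonneg x, Real.sqrt_nonneg y]
    _ = _ := Real.sqrt_sq (by positivity)

lemma abs_le_sqrt_sum (s : Finset ℕ) (x : ℕ → ℝ) {i : ℕ} (hi : i ∈ s) :
    |x i| ≤ Real.sqrt (∑ j ∈ s, x j ^ 2) := by
  have h : x i ^ 2 ≤ ∑ j ∈ s, x j ^ 2 :=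
    Finset.single_le_sum (fun j _ => sq_nonneg (x j)) hi
  calc |x i| = Real.sqrt (x i ^ 2) := (Real.sqrt_sq_eq_abs _).symm
    _ ≤ _ := Real.sqrt_le_sqrt h

lemma raw_contract (t : ℕ) (μ₁ μ₂ : ℝ) (hμ₁ : 0 < μ₁) (hμ₂ : 0 < μ₂)
    (θ φ c rawv : ℕ → ℝ)
    (hrawv : ∀ i, rawv i =
      μ₁ / (μ₁ + μ₂) * θ i
        + φ i / (μ₁ + μ₂ + ∑ j ∈ Finset.range (t + 1), φ j ^ 2)
          * ((∑ q ∈ Finset.range (t + 1), c q * φ q)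
              - μ₁ / (μ₁ + μ₂) * ∑ j ∈ Finset.range (t + 1), θ j * φ j)) :
    Real.sqrt (∑ i ∈ Finset.range (t + 1), rawv i ^ 2)
      ≤ μ₁ / (μ₁ + μ₂) * Real.sqrt (∑ i ∈ Finset.range (t + 1), θ i ^ 2)
        + 2 * Real.sqrt (∑ i ∈ Finset.range (t + 1), c i ^ 2) := by
  set s := Finset.range (t + 1) with hs
  have hμ12 : (0:ℝ) < μ₁ + μ₂ := by linarith
  set A : ℝ := μ₁ / (μ₁ + μ₂) with hA
  have hA0 : 0 ≤ A := by positivity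
  set S := ∑ j ∈ s, φ j ^ 2 with hSdef
  have hS0 : 0 ≤ S := Finset.sum_nonneg fun _ _ => sq_nonneg _
  have hD : (0:ℝ) < μ₁ + μ₂ + S := by linarith
  set P := ∑ i ∈ s, φ i * (A * θ i - c i) with hPdef
  have hP : P = A * (∑ j ∈ s, θ j * φ j) - ∑ q ∈ s, c q * φ q := by
    rw [hPdef, Finset.mul_sum, ← Finset.sum_sub_distrib]
    exact Finset.sum_congr rfl fun j _ => by ring
  -- pointwise identity
  have hpt : ∀ i, rawv i - c i = (A * θ i - c i) - φ i * (P / (μ₁ + μ₂ + S)) := by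
    intro i
    rw [hrawv i, hP]
    field_simp
    ring
  -- contraction bound
  have hcontr := sq_contract s (fun i => A * θ i - c i) φ (μ₁ + μ₂) hμ12
  have hcontr' : ∑ i ∈ s, (rawv i - c i) ^ 2 ≤ ∑ i ∈ s, (A * θ i - c i) ^ 2 := by
    calc ∑ i ∈ s, (rawv i - c i) ^ 2
        = ∑ i ∈ s, ((A * θ i - c i) - φ i * (P / (μ₁ + μ₂ + S))) ^ 2 :=
          Finset.sum_congr rfl fun i _ => by rw [hpt i]
      _ ≤ _ := hcontr
  -- assemble with square roots
  have step1 : Real.sqrt (∑ i ∈ s, rawv i ^ 2)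
      ≤ Real.sqrt (∑ i ∈ s, (rawv i - c i) ^ 2) + Real.sqrt (∑ i ∈ s, c i ^ 2) := by
    have := sqrt_sum_sq_add s (fun i => rawv i - c i) c
    have heq : ∑ i ∈ s, ((rawv i - c i) + c i) ^ 2 = ∑ i ∈ s, rawv i ^ 2 :=
      Finset.sum_congr rfl fun i _ => by ring
    rwa [heq] at this
  have step2 : Real.sqrt (∑ i ∈ s, (rawv i - c i) ^ 2)
      ≤ Real.sqrt (∑ i ∈ s, (A * θ i - c i) ^ 2) := Real.sqrt_le_sqrt hcontr'
  have step3 : Real.sqrt (∑ i ∈ s, (A * θ i - c i) ^ 2)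
      ≤ A * Real.sqrt (∑ i ∈ s, θ i ^ 2) + Real.sqrt (∑ i ∈ s, c i ^ 2) := by
    have := sqrt_sum_sq_add s (fun i => A * θ i) (fun i => - c i)
    have heq : ∑ i ∈ s, (A * θ i + - c i) ^ 2 = ∑ i ∈ s, (A * θ i - c i) ^ 2 :=
      Finset.sum_congr rfl fun i _ => by ring
    have heq2 : ∑ i ∈ s, (- c i) ^ 2 = ∑ i ∈ s, c i ^ 2 :=
      Finset.sum_congr rfl fun i _ => by ring
    have heq3 : ∑ i ∈ s, (A * θ i) ^ 2 = A ^ 2 * ∑ i ∈ s, θ i ^ 2 := by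
      rw [Finset.mul_sum]; exact Finset.sum_congr rfl fun i _ => by ring
    rw [heq, heq2, heq3] at this
    rwa [Real.sqrt_mul (sq_nonneg A), Real.sqrt_sq hA0] at this
  linarith

/-- Theorem 2 of the paper: running Algorithm 1 on system (1) under Assumption (A1),
all estimated parameters `θ̂_{k,k−1,t}(i)` are bounded, and the diagonal estimates
`θ̂_{k,k−1,t}(t)` stay in `[ε, β̂]`; this holds for any `λ > 0` and `γ₁,…,γ_m > 0`. -/
theorem stmt16
    -- system (1) and Assumption (A1)
    (l n T : ℕ) (hT : 1 ≤ T)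
    (βmin βmax : ℝ) (hβmin : 0 < βmin) (hββ : βmin ≤ βmax)
    (f : (Fin (l + n + 2) → ℝ) → ℕ → ℝ)
    (hf1 : ∀ t, t < T → ContDiff ℝ 1 fun x => f x t)
    (hf2 : ∀ t, t < T → ∀ x, ∀ i, |fderiv ℝ (fun x => f x t) x (Pi.single i 1)| ≤ βmax)
    (hf3 : ∀ t, t < T → ∀ x,
      fderiv ℝ (fun x => f x t) x (Pi.single (⟨l + 1, by omega⟩ : Fin (l + n + 2)) 1)
        ∈ Set.Icc βmin βmax)
    -- parameters of Algorithm 1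
    (m : ℕ) (hm : 1 ≤ m)
    (lam : ℝ) (hlam : 0 < lam) (γ : ℕ → ℝ) (hγ : ∀ i ∈ Finset.Icc 1 m, 0 < γ i)
    (μ₁ μ₂ ε : ℝ) (hμ₁ : 0 < μ₁) (hμ₂ : 0 < μ₂) (hε : 0 < ε)
    (yd : ℕ → ℝ) (y₀ : ℝ)
    -- iterated trajectories, tracking errors
    (u : ℕ → ℕ → ℝ) (y : ℕ → ℕ → ℝ)
    (hy : ∀ k : ℕ, IsTraj l n T f y₀ (u k) (y k))
    (e : ℤ → ℕ → ℝ)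
    (he0 : ∀ i : ℤ, i < 0 → ∀ t, e i t = 0)
    (he : ∀ k : ℕ, ∀ t, e (k : ℤ) t = yd t - y k t)
    -- parameter estimation of Algorithm 1, with reset below the threshold ε
    (θh : ℕ → ℕ → ℕ → ℝ)
    (hθinit : ∀ t, t < T → ε ≤ θh 1 t t)
    (raw : ℕ → ℕ → ℕ → ℝ)
    (hraw : ∀ k, 2 ≤ k → ∀ t i, raw k t i =
      μ₁ / (μ₁ + μ₂) * θh (k - 1) t i
        + (u (k - 1) i - u (k - 2) i)
            / (μ₁ + μ₂ + ∑ j ∈ Finset.range (t + 1), (u (k - 1) j - u (k - 2) j) ^ 2)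
          * (y (k - 1) (t + 1) - y (k - 2) (t + 1)
              - μ₁ / (μ₁ + μ₂)
                * ∑ j ∈ Finset.range (t + 1), θh (k - 1) t j * (u (k - 1) j - u (k - 2) j)))
    (hθupd : ∀ k, 2 ≤ k → ∀ t, t < T → ∀ i, i ≤ t →
      θh k t i = if i = t ∧ raw k t t < ε then θh 1 t t else raw k t i)
    -- input updating of Algorithm 1
    (hu : ∀ k : ℕ, 1 ≤ k → ∀ t, t < T →
      u k t = u (k - 1) t
        - γ 1 ^ 2 * θh k t t / (lam + γ 1 ^ 2 * θh k t t ^ 2)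
            * ∑ i ∈ Finset.range t, θh k t i * (u k i - u (k - 1) i)
        + γ 1 * θh k t t / (lam + γ 1 ^ 2 * θh k t t ^ 2)
            * (γ 1 * e ((k : ℤ) - 1) (t + 1)
                + ∑ i ∈ Finset.Icc 2 m, γ i * e ((k : ℤ) - (i : ℤ) + 1) (t + 1))) :
    -- conclusion: boundedness of all estimated parameters
    ∃ βh : ℝ, ε ≤ βh ∧
      (∀ k, 1 ≤ k → ∀ t, t < T → ∀ i, i ≤ t → |θh k t i| ≤ βh) ∧
      (∀ k, 1 ≤ k → ∀ t, t < T → θh k t t ∈ Set.Icc ε βh) := by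
  have hβ0 : (0:ℝ) ≤ βmax := le_trans hβmin.le hββ
  have hμ12 : (0:ℝ) < μ₁ + μ₂ := by linarith
  -- uniform bound on the true parameter vectors
  set B : ℝ := ((l + n + 2 : ℝ) * (βmax + 1) + 1) ^ T with hBdef
  have hB0 : (0:ℝ) ≤ B := by positivity
  -- per-time-step constants
  set R : ℕ → ℝ := fun t => 2 * (Real.sqrt T * B) + |θh 1 t t| with hRdef
  have hR0 : ∀ t, 0 ≤ R t := fun t => by
    have : (0:ℝ) ≤ Real.sqrt T * B := mul_nonneg (Real.sqrt_nonneg _) hB0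
    rw [hRdef]
    dsimp only
    positivity
  set M : ℕ → ℝ := fun t =>
    max (Real.sqrt (∑ i ∈ Finset.range (t + 1), (θh 1 t i) ^ 2))
      (R t * (μ₁ + μ₂) / μ₂) with hMdef
  have hM0 : ∀ t, 0 ≤ M t := fun t =>
    le_trans (Real.sqrt_nonneg _) (le_max_left _ _)
  -- the ℓ²-norm of each estimate vector is bounded by M t
  have main : ∀ t, t < T → ∀ j : ℕ,
      Real.sqrt (∑ i ∈ Finset.range (t + 1), (θh (j + 1) t i) ^ 2) ≤ M t := by
    intro t ht j
    induction j with
    | zero => exact le_max_left _ _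
    | succ j ihj =>
      -- true-parameter representation of the output difference
      obtain ⟨c, hc1, hc2⟩ := key_repr l n T βmax hβ0 f hf1 hf2 y₀
        (u (j + 1)) (u j) (y (j + 1)) (y j) (hy (j + 1)) (hy j) t ht
      -- contraction bound on raw
      have hcontr := raw_contract t μ₁ μ₂ hμ₁ hμ₂ (θh (j + 1) t)
        (fun i => u (j + 1) i - u j i) c (raw (j + 2) t)
        (fun i => by
          have h := hraw (j + 2) (by omega) t i
          rw [show j + 2 - 1 = j + 1 from rfl, show j + 2 - 2 = j from rfl] at h
          rw [h, hc2])
      -- ℓ² bound on c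
      have hcB : Real.sqrt (∑ i ∈ Finset.range (t + 1), c i ^ 2) ≤ Real.sqrt T * B := by
        have hsum : ∑ i ∈ Finset.range (t + 1), c i ^ 2 ≤ (T : ℝ) * B ^ 2 := by
          calc ∑ i ∈ Finset.range (t + 1), c i ^ 2
              ≤ ∑ _i ∈ Finset.range (t + 1), B ^ 2 :=
                Finset.sum_le_sum fun i _ => by
                  have := hc1 i
                  nlinarith [abs_nonneg (c i), neg_abs_le (c i), le_abs_self (c i)]
            _ = ((t + 1 : ℕ) : ℝ) * B ^ 2 := by
                rw [Finset.sum_const, Finset.card_range, nsmul_eq_mul]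
            _ ≤ (T : ℝ) * B ^ 2 := by
                have : ((t + 1 : ℕ) : ℝ) ≤ (T : ℝ) := by exact_mod_cast ht
                nlinarith [sq_nonneg B]
        calc Real.sqrt (∑ i ∈ Finset.range (t + 1), c i ^ 2)
            ≤ Real.sqrt ((T : ℝ) * B ^ 2) := Real.sqrt_le_sqrt hsum
          _ = Real.sqrt T * B := by
              rw [Real.sqrt_mul (by positivity), Real.sqrt_sq hB0]
      -- from raw to θh (j+2)
      have hθsq : ∑ i ∈ Finset.range (t + 1), (θh (j + 2) t i) ^ 2
          ≤ (∑ i ∈ Finset.range (t + 1), (raw (j + 2) t i) ^ 2) + |θh 1 t t| ^ 2 := by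
        calc ∑ i ∈ Finset.range (t + 1), (θh (j + 2) t i) ^ 2
            ≤ ∑ i ∈ Finset.range (t + 1),
                ((raw (j + 2) t i) ^ 2 + (if i = t then |θh 1 t t| ^ 2 else 0)) := by
              apply Finset.sum_le_sum
              intro i hi
              have hit : i ≤ t := by simp only [Finset.mem_range] at hi; omega
              rw [hθupd (j + 2) (by omega) t ht i hit]
              by_cases hcase : i = t ∧ raw (j + 2) t t < ε
              · rw [if_pos hcase, if_pos hcase.1]
                have := sq_abs (θh 1 t t)
                nlinarith [sq_nonneg (raw (j + 2) t i)]
              · rw [if_neg hcase]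
                split_ifs with h'
                · nlinarith [sq_nonneg (|θh 1 t t|)]
                · linarith
          _ = _ := by
              rw [Finset.sum_add_distrib]
              congr 1
              rw [Finset.sum_ite_eq' (Finset.range (t + 1)) t fun _ => |θh 1 t t| ^ 2]
              rw [if_pos (Finset.mem_range.mpr (by omega))]
      have hθn : Real.sqrt (∑ i ∈ Finset.range (t + 1), (θh (j + 2) t i) ^ 2)
          ≤ Real.sqrt (∑ i ∈ Finset.range (t + 1), (raw (j + 2) t i) ^ 2) + |θh 1 t t| := by
        calc Real.sqrt (∑ i ∈ Finset.range (t + 1), (θh (j + 2) t i) ^ 2)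
            ≤ Real.sqrt ((∑ i ∈ Finset.range (t + 1), (raw (j + 2) t i) ^ 2)
                + |θh 1 t t| ^ 2) := Real.sqrt_le_sqrt hθsq
          _ ≤ Real.sqrt (∑ i ∈ Finset.range (t + 1), (raw (j + 2) t i) ^ 2)
                + Real.sqrt (|θh 1 t t| ^ 2) :=
              sqrt_add_le' _ _ (Finset.sum_nonneg fun _ _ => sq_nonneg _) (sq_nonneg _)
          _ = _ := by rw [Real.sqrt_sq (abs_nonneg _)]
      -- combine
      have hfin : Real.sqrt (∑ i ∈ Finset.range (t + 1), (θh (j + 2) t i) ^ 2)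
          ≤ μ₁ / (μ₁ + μ₂) * M t + R t := by
        have h1 : μ₁ / (μ₁ + μ₂)
            * Real.sqrt (∑ i ∈ Finset.range (t + 1), (θh (j + 1) t i) ^ 2)
            ≤ μ₁ / (μ₁ + μ₂) * M t :=
          mul_le_mul_of_nonneg_left ihj (by positivity)
        rw [hRdef]
        dsimp only
        linarith
      -- contraction closes the induction
      have hstep : μ₁ / (μ₁ + μ₂) * M t + R t ≤ M t := by
        have hRM : R t * (μ₁ + μ₂) / μ₂ ≤ M t := le_max_right _ _
        have h2 : R t * (μ₁ + μ₂) ≤ M t * μ₂ := by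
          rwa [div_le_iff₀ hμ₂] at hRM
        have h4 : R t ≤ M t * μ₂ / (μ₁ + μ₂) := by
          rw [le_div_iff₀ hμ12]
          linarith
        have h5 : μ₁ / (μ₁ + μ₂) * M t + M t * μ₂ / (μ₁ + μ₂) = M t := by
          field_simp
        linarith
      exact le_trans hfin hstep
  -- diagonal entries stay above ε
  have hdiag : ∀ k, 1 ≤ k → ∀ t, t < T → ε ≤ θh k t t := by
    intro k hk t ht
    rcases Nat.lt_or_ge k 2 with hk2 | hk2
    · have : k = 1 := by omega
      subst this
      exact hθinit t ht
    · rw [hθupd k hk2 t ht t le_rfl]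
      split_ifs with h
      · exact hθinit t ht
      · push_neg at h
        have := h rfl
        linarith
  -- global bound
  refine ⟨ε + ∑ t ∈ Finset.range T, max (M t) 0, ?_, ?_, ?_⟩
  · have : (0:ℝ) ≤ ∑ t ∈ Finset.range T, max (M t) 0 :=
      Finset.sum_nonneg fun t _ => le_max_right _ _
    linarith
  · intro k hk t ht i hi
    obtain ⟨j, rfl⟩ : ∃ j, k = j + 1 := ⟨k - 1, by omega⟩
    have h1 : |θh (j + 1) t i| ≤ M t :=
      le_trans (abs_le_sqrt_sum (Finset.range (t + 1)) (θh (j + 1) t)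
        (Finset.mem_range.mpr (by omega))) (main t ht j)
    have h2 : max (M t) 0 ≤ ∑ t ∈ Finset.range T, max (M t) 0 :=
      Finset.single_le_sum (f := fun t => max (M t) 0)
        (fun t _ => le_max_right _ _) (Finset.mem_range.mpr ht)
    have h3 : M t ≤ max (M t) 0 := le_max_left _ _
    linarith
  · intro k hk t ht
    constructor
    · exact hdiag k hk t ht
    · obtain ⟨j, rfl⟩ : ∃ j, k = j + 1 := ⟨k - 1, by omega⟩
      have h1 : |θh (j + 1) t t| ≤ M t :=
        le_trans (abs_le_sqrt_sum (Finset.range (t + 1)) (θh (j + 1) t)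
          (Finset.mem_range.mpr (by omega))) (main t ht j)
      have h2 : max (M t) 0 ≤ ∑ t ∈ Finset.range T, max (M t) 0 :=
        Finset.single_le_sum (f := fun t => max (M t) 0)
          (fun t _ => le_max_right _ _) (Finset.mem_range.mpr ht)
      have h3 : M t ≤ max (M t) 0 := le_max_left _ _
      have h4 : θh (j + 1) t t ≤ |θh (j + 1) t t| := le_abs_self _
      linarith
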